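/- In the regularised RBM construction, for any visible configuration v' not in the represented set Ω, all effective fields on hidden neurons 2A(v'·v^α - V + λ_α) are negative, and hence the unique hidden configuration minimizing E(v', h) is h = -e (all hidden spins equal to -1). -/
import Mathlib


open Finset

/-- Energy of the regularised RBM with weights `W j α = 2 A v α j`, zero visible
biases and hidden biases `c α = 2 A (λ α - V)`. -/
noncomputable def raEnergy {V H : ℕ} (A : ℝ) (lam : Fin H → ℝ)
    (v : Fin H → Fin V → ℝ) (x : Fin V → ℝ) (h : Fin H → ℝ) : ℝ :=
  -(∑ j, ∑ α, x j * (2 * A * v α j) * h α)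
    - ∑ α, (2 * A * (lam α - (V : ℝ))) * h α

/-- Overlap `S α η = v^α · v^η`. -/
noncomputable def raOverlap {V H : ℕ} (v : Fin H → Fin V → ℝ) (α η : Fin H) : ℝ :=
  ∑ j, v α j * v η j

lemma raEnergy_eq {V H : ℕ} (A : ℝ) (lam : Fin H → ℝ)
    (v : Fin H → Fin V → ℝ) (x : Fin V → ℝ) (h : Fin H → ℝ) :
    raEnergy A lam v x h
      = -∑ α, (2 * A * ((∑ j, x j * v α j) - (V : ℝ) + lam α)) * h α := by
  unfold raEnergy
  rw [Finset.sum_comm]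
  have h1 : ∀ α : Fin H, ∑ j, x j * (2 * A * v α j) * h α
      = 2 * A * (∑ j, x j * v α j) * h α := by
    intro α
    rw [Finset.mul_sum, Finset.sum_mul]
    exact Finset.sum_congr rfl (fun j _ => by ring)
  simp_rw [h1]
  rw [← neg_add', ← Finset.sum_add_distrib]
  congr 1
  exact Finset.sum_congr rfl (fun α _ => by ring)

theorem regularised_nonrepresented_fields_negative
    (V H : ℕ) (A : ℝ) (hA : 0 < A) (lam : Fin H → ℝ)
    (hlam : ∀ α, 3 / 4 < lam α ∧ lam α < 5 / 4)
    (v : Fin H → Fin V → ℝ)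
    (hpm : ∀ η j, v η j = 1 ∨ v η j = -1)
    (hdist : Function.Injective v)
    (hneg : ∀ η, ∃ η', ∀ j, v η' j = -(v η j))
    (v' : Fin V → ℝ)
    (hv'pm : ∀ j, v' j = 1 ∨ v' j = -1)
    (hv' : ∀ η, v' ≠ v η) :
    -- all effective fields on hidden neurons are negative
    (∀ α, 2 * A * ((∑ j, v' j * v α j) - (V : ℝ) + lam α) < 0) ∧
    -- hence the all-(-1) hidden configuration is the unique minimizer
    (∀ h : Fin H → ℝ, (∀ α, h α = 1 ∨ h α = -1) →
      h ≠ (fun _ => (-1 : ℝ)) →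
      raEnergy A lam v v' (fun _ => (-1 : ℝ)) < raEnergy A lam v v' h) := by
  have key : ∀ α, 2 * A * ((∑ j, v' j * v α j) - (V : ℝ) + lam α) < 0 := by
    intro α
    -- find a coordinate where v' differs from v α
    have hne : v' ≠ v α := hv' α
    have : ∃ j, v' j ≠ v α j := by
      by_contra hc
      push_neg at hc
      exact hne (funext hc)
    obtain ⟨j0, hj0⟩ := this
    have hterm : v' j0 * v α j0 = -1 := by
      rcases hv'pm j0 with h1 | h1 <;> rcases hpm α j0 with h2 | h2 <;>
        simp [h1, h2] at hj0 ⊢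
    have hS : (∑ j, v' j * v α j) ≤ (V : ℝ) - 2 := by
      rw [← Finset.add_sum_erase _ _ (Finset.mem_univ j0), hterm]
      have hb : ∑ j ∈ Finset.univ.erase j0, v' j * v α j
          ≤ (((Finset.univ.erase j0).card : ℕ) : ℝ) * 1 := by
        rw [← nsmul_eq_mul]
        apply Finset.sum_le_card_nsmul
        intro j _
        rcases hv'pm j with h1 | h1 <;> rcases hpm α j with h2 | h2 <;>
          simp [h1, h2]
      have hcard : (Finset.univ.erase j0).card = V - 1 := by
        rw [Finset.card_erase_of_mem (Finset.mem_univ j0), Finset.card_univ,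
          Fintype.card_fin]
      have hV : 1 ≤ V := by
        have := Fin.pos j0; omega
      rw [hcard] at hb
      have : ((V - 1 : ℕ) : ℝ) = (V : ℝ) - 1 := by
        push_cast [hV]; ring
      rw [this] at hb
      linarith
    have hl := (hlam α).2
    have : (∑ j, v' j * v α j) - (V : ℝ) + lam α < 0 := by linarith
    exact mul_neg_of_pos_of_neg (by linarith) this
  refine ⟨key, ?_⟩
  intro h hhpm hhne
  rw [raEnergy_eq, raEnergy_eq, neg_lt_neg_iff]
  apply Finset.sum_lt_sum
  · intro α _
    rcases hhpm α with h1 | h1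
    · rw [h1]; nlinarith [key α]
    · rw [h1]
  · have : ∃ α, h α ≠ -1 := by
      by_contra hc
      push_neg at hc
      exact hhne (funext hc)
    obtain ⟨α, hα⟩ := this
    have h1 : h α = 1 := (hhpm α).resolve_right hα
    refine ⟨α, Finset.mem_univ α, ?_⟩
    rw [h1]; nlinarith [key α]
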